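/- Let I be an open real interval, α ∈ ℝ, and let w : [0,1] × I → ℝ be C³. Then for all t ∈ I: ∫₀¹ w_xtt(x,t)((1−α) w_x(x,t) + x w_xx(x,t)) dx = d/dt ∫₀¹ ((1−α) w_x(x,t) w_xt(x,t) + x w_xt(x,t) w_xx(x,t)) dx + (α−½)∫₀¹ w_xt(x,t)² dx − ½ w_xt(1,t)². -/

import Mathlib

open Real Set

/-- `w_t`: partial derivative of `w` in time. -/
noncomputable def pt (w : ℝ → ℝ → ℝ) (x t : ℝ) : ℝ := deriv (fun s => w x s) t

/-- `w_x`: partial derivative of `w` in space. -/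
noncomputable def px (w : ℝ → ℝ → ℝ) (x t : ℝ) : ℝ := deriv (fun y => w y t) x

/-- `w_tt`. -/
noncomputable def ptt (w : ℝ → ℝ → ℝ) (x t : ℝ) : ℝ := deriv (fun s => pt w x s) t

/-- `w_xt`: spatial derivative of `w_t`. -/
noncomputable def pxt (w : ℝ → ℝ → ℝ) (x t : ℝ) : ℝ := deriv (fun y => pt w y t) x

/-- `w_xx`. -/
noncomputable def pxx (w : ℝ → ℝ → ℝ) (x t : ℝ) : ℝ := deriv (fun y => px w y t) x

/-- `w_xxx`. -/
noncomputable def pxxx (w : ℝ → ℝ → ℝ) (x t : ℝ) : ℝ := deriv (fun y => pxx w y t) x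

/-- `w_xxxx`. -/
noncomputable def pxxxx (w : ℝ → ℝ → ℝ) (x t : ℝ) : ℝ := deriv (fun y => pxxx w y t) x

/-- `w_xtt`: time derivative of `w_xt`. -/
noncomputable def pxtt (w : ℝ → ℝ → ℝ) (x t : ℝ) : ℝ := deriv (fun s => pxt w x s) t

/-- `w_xxtt`: second spatial derivative of `w_tt`. -/
noncomputable def pxxtt (w : ℝ → ℝ → ℝ) (x t : ℝ) : ℝ :=
  deriv (fun y => deriv (fun z => ptt w z t) y) x

/-- The energy E(t) = ½∫₀¹ w_t² + ½∫₀¹ w_xx² + ½∫₀¹ w_xt² dx. -/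
noncomputable def energy (w : ℝ → ℝ → ℝ) (t : ℝ) : ℝ :=
  (1/2) * (∫ x in (0:ℝ)..1, (pt w x t) ^ 2)
    + (1/2) * (∫ x in (0:ℝ)..1, (pxx w x t) ^ 2)
    + (1/2) * (∫ x in (0:ℝ)..1, (pxt w x t) ^ 2)

/-- The auxiliary functional ϱ(t) = ∫₀¹ ( w_t(x w_x − α w) + w_xt[(1−α)w_x + x w_xx] ) dx. -/
noncomputable def rhoFun (w : ℝ → ℝ → ℝ) (α : ℝ) (t : ℝ) : ℝ :=
  ∫ x in (0:ℝ)..1,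
    (pt w x t * (x * px w x t - α * w x t)
      + pxt w x t * ((1 - α) * px w x t + x * pxx w x t))


section Aux8

/-- Directional derivative of a bivariate function. -/
noncomputable def pd8 (f : ℝ × ℝ → ℝ) (v : ℝ × ℝ) : ℝ × ℝ → ℝ := fun p => fderiv ℝ f p v

lemma pd8_contDiff {f : ℝ × ℝ → ℝ} {m n : WithTop ℕ∞} (hf : ContDiff ℝ n f) (h : m + 1 ≤ n)
    (v : ℝ × ℝ) : ContDiff ℝ m (pd8 f v) :=
  (hf.fderiv_right h).clm_apply contDiff_const

lemma pd8_snd (x t : ℝ) {f : ℝ × ℝ → ℝ} (hf : DifferentiableAt ℝ f (x, t)) :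
    HasDerivAt (fun s => f (x, s)) (pd8 f (0, 1) (x, t)) t :=
  hf.hasFDerivAt.comp_hasDerivAt t ((hasDerivAt_const t x).prodMk (hasDerivAt_id t))

lemma pd8_fst (x t : ℝ) {f : ℝ × ℝ → ℝ} (hf : DifferentiableAt ℝ f (x, t)) :
    HasDerivAt (fun y => f (y, t)) (pd8 f (1, 0) (x, t)) x :=
  hf.hasFDerivAt.comp_hasDerivAt x ((hasDerivAt_id x).prodMk (hasDerivAt_const x t))

lemma pd8_apply_eq {c : ℝ × ℝ → (ℝ × ℝ →L[ℝ] ℝ)} {p : ℝ × ℝ} (hc : DifferentiableAt ℝ c p)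
    (u v : ℝ × ℝ) : fderiv ℝ (fun q => c q v) p u = (fderiv ℝ c p u) v := by
  rw [fderiv_clm_apply hc (differentiableAt_const v)]
  simp

lemma pd8_swap {f : ℝ × ℝ → ℝ} (hf : ContDiff ℝ 2 f) (p : ℝ × ℝ) :
    pd8 (pd8 f (0, 1)) (1, 0) p = pd8 (pd8 f (1, 0)) (0, 1) p := by
  have hd : DifferentiableAt ℝ (fderiv ℝ f) p :=
    ((hf.fderiv_right (m := 1) (by norm_num)).differentiable (by norm_num)) p
  have h1 : pd8 (pd8 f (0, 1)) (1, 0) p = fderiv ℝ (fderiv ℝ f) p (1, 0) (0, 1) := by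
    unfold pd8
    exact pd8_apply_eq hd _ _
  have h2 : pd8 (pd8 f (1, 0)) (0, 1) p = fderiv ℝ (fderiv ℝ f) p (0, 1) (1, 0) := by
    unfold pd8
    exact pd8_apply_eq hd _ _
  rw [h1, h2, (hf.contDiffAt.isSymmSndFDerivAt (by norm_num)).eq]

lemma pd8_slice_cont {f : ℝ × ℝ → ℝ} (hf : Continuous f) (s : ℝ) :
    Continuous fun y => f (y, s) :=
  hf.comp (continuous_id.prodMk continuous_const)

end Aux8

/-- Integration-by-parts identity for 𝒩₂ = ∫₀¹ w_xtt ((1−α) w_x + x w_xx) dx: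
𝒩₂ = d/dt ∫₀¹ ((1−α) w_x w_xt + x w_xt w_xx) dx + (α−½)∫₀¹ w_xt² dx − ½ w_xt(1,t)². -/
theorem stmt_8 (a b α : ℝ) (w : ℝ → ℝ → ℝ)
    (hw : ContDiff ℝ 3 (Function.uncurry w)) :
    ∀ t ∈ Set.Ioo a b,
      (∫ x in (0:ℝ)..1, pxtt w x t * ((1 - α) * px w x t + x * pxx w x t))
        = deriv (fun s => ∫ x in (0:ℝ)..1,
              ((1 - α) * px w x s * pxt w x s + x * pxt w x s * pxx w x s)) t
          + (α - 1/2) * (∫ x in (0:ℝ)..1, (pxt w x t) ^ 2)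
          - (1/2) * (pxt w 1 t) ^ 2 := by
  intro t _
  set W : ℝ × ℝ → ℝ := Function.uncurry w with hWdef
  have hW : ContDiff ℝ 3 W := hw
  set A : ℝ × ℝ → ℝ := pd8 W (0, 1) with hAdef
  set B : ℝ × ℝ → ℝ := pd8 W (1, 0) with hBdef
  set A1 : ℝ × ℝ → ℝ := pd8 A (1, 0) with hA1def
  set B1 : ℝ × ℝ → ℝ := pd8 B (1, 0) with hB1def
  set A1t : ℝ × ℝ → ℝ := pd8 A1 (0, 1) with hA1tdef
  set B1t : ℝ × ℝ → ℝ := pd8 B1 (0, 1) with hB1tdef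
  set A1x : ℝ × ℝ → ℝ := pd8 A1 (1, 0) with hA1xdef
  have hA2 : ContDiff ℝ 2 A := pd8_contDiff hW (by norm_num) _
  have hB2 : ContDiff ℝ 2 B := pd8_contDiff hW (by norm_num) _
  have hA11 : ContDiff ℝ 1 A1 := pd8_contDiff hA2 (by norm_num) _
  have hB11 : ContDiff ℝ 1 B1 := pd8_contDiff hB2 (by norm_num) _
  have cA1 : Continuous A1 := hA11.continuous
  have cB : Continuous B := hB2.continuous
  have cB1 : Continuous B1 := hB11.continuous
  have cA1t : Continuous A1t := (pd8_contDiff (m := 0) hA11 (by norm_num) _).continuous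
  have cB1t : Continuous B1t := (pd8_contDiff (m := 0) hB11 (by norm_num) _).continuous
  have cA1x : Continuous A1x := (pd8_contDiff (m := 0) hA11 (by norm_num) _).continuous
  -- identify curried partial derivatives
  have hpt : ∀ y s, pt w y s = A (y, s) := fun y s =>
    (pd8_snd y s ((hW.differentiable (by norm_num)) (y, s))).deriv
  have hpx : ∀ y s, px w y s = B (y, s) := fun y s =>
    (pd8_fst y s ((hW.differentiable (by norm_num)) (y, s))).deriv
  have hpxt : ∀ y s, pxt w y s = A1 (y, s) := by
    intro y s
    have h : (fun z => pt w z s) = fun z => A (z, s) := funext fun z => hpt z s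
    unfold pxt
    rw [h]
    exact (pd8_fst y s ((hA2.differentiable (by norm_num)) (y, s))).deriv
  have hpxx : ∀ y s, pxx w y s = B1 (y, s) := by
    intro y s
    have h : (fun z => px w z s) = fun z => B (z, s) := funext fun z => hpx z s
    unfold pxx
    rw [h]
    exact (pd8_fst y s ((hB2.differentiable (by norm_num)) (y, s))).deriv
  have hpxtt : ∀ y s, pxtt w y s = A1t (y, s) := by
    intro y s
    have h : (fun s' => pxt w y s') = fun s' => A1 (y, s') := funext fun s' => hpxt y s'
    unfold pxtt
    rw [h]
    exact (pd8_snd y s ((hA11.differentiable (by norm_num)) (y, s))).deriv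
  -- symmetry of second derivatives
  have hsw1 : ∀ p, A1 p = pd8 B (0, 1) p := fun p => pd8_swap (hW.of_le (by norm_num)) p
  have hsw2 : ∀ p, A1x p = B1t p := by
    intro p
    have h1 : A1 = pd8 B (0, 1) := funext hsw1
    calc A1x p = pd8 (pd8 B (0, 1)) (1, 0) p := by rw [hA1xdef, h1]
      _ = pd8 (pd8 B (1, 0)) (0, 1) p := pd8_swap hB2 p
      _ = B1t p := rfl
  -- time derivatives of slices
  have hDB : ∀ y s, HasDerivAt (fun s' => B (y, s')) (A1 (y, s)) s := by
    intro y s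
    have h := pd8_snd y s ((hB2.differentiable (by norm_num)) (y, s))
    rwa [← hsw1 (y, s)] at h
  have hDA1 : ∀ y s, HasDerivAt (fun s' => A1 (y, s')) (A1t (y, s)) s := fun y s =>
    pd8_snd y s ((hA11.differentiable (by norm_num)) (y, s))
  have hDB1 : ∀ y s, HasDerivAt (fun s' => B1 (y, s')) (B1t (y, s)) s := fun y s =>
    pd8_snd y s ((hB11.differentiable (by norm_num)) (y, s))
  have hDA1x : ∀ y s, HasDerivAt (fun y' => A1 (y', s)) (A1x (y, s)) y := fun y s =>
    pd8_fst y s ((hA11.differentiable (by norm_num)) (y, s))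
  -- integrand and its time derivative
  set G : ℝ → ℝ → ℝ := fun y s => (1 - α) * B (y, s) * A1 (y, s) + y * A1 (y, s) * B1 (y, s)
    with hGdef
  set G' : ℝ → ℝ → ℝ := fun y s =>
      (1 - α) * A1 (y, s) * A1 (y, s) + (1 - α) * B (y, s) * A1t (y, s)
        + (y * A1t (y, s) * B1 (y, s) + y * A1 (y, s) * B1t (y, s)) with hG'def
  have hDG : ∀ y s, HasDerivAt (fun s' => G y s') (G' y s) s := by
    intro y s
    have h1 := ((hDB y s).const_mul (1 - α)).mul (hDA1 y s)
    have h2 := ((hDA1 y s).const_mul y).mul (hDB1 y s)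
    have h3 := h1.add h2
    exact h3
  have cG : ∀ s, Continuous fun y => G y s := by
    intro s
    simp only [hGdef]
    fun_prop
  have cG'unc : Continuous fun p : ℝ × ℝ => G' p.1 p.2 := by
    simp only [hG'def]
    fun_prop
  have cG' : ∀ s, Continuous fun y => G' y s := by
    intro s
    exact cG'unc.comp (continuous_id.prodMk continuous_const)
  -- bound on a compact neighborhood
  obtain ⟨C, hC⟩ := ((isCompact_Icc.prod isCompact_Icc) :
      IsCompact ((Icc (0:ℝ) 1) ×ˢ (Icc (t - 1) (t + 1)))).exists_bound_of_continuousOn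
    cG'unc.continuousOn
  -- differentiation under the integral sign
  have key := intervalIntegral.hasDerivAt_integral_of_dominated_loc_of_deriv_le
    (F := fun s y => G y s) (F' := fun s y => G' y s) (x₀ := t) (a := (0:ℝ)) (b := 1)
    (bound := fun _ => C) (μ := MeasureTheory.volume) (s := Metric.ball t 1) (Metric.ball_mem_nhds t zero_lt_one)
    (Filter.Eventually.of_forall fun s => (cG s).aestronglyMeasurable)
    ((cG t).intervalIntegrable 0 1)
    (cG' t).aestronglyMeasurable
    (MeasureTheory.ae_of_all _ (by
      intro y hy s hs
      have hy' : y ∈ Icc (0:ℝ) 1 := by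
        rw [Set.uIoc_of_le (by norm_num : (0:ℝ) ≤ 1)] at hy
        exact ⟨le_of_lt hy.1, hy.2⟩
      have hs' : s ∈ Icc (t - 1) (t + 1) := by
        rw [Metric.mem_ball, Real.dist_eq, abs_sub_lt_iff] at hs
        constructor <;> linarith [hs.1, hs.2]
      exact hC (y, s) (Set.mk_mem_prod hy' hs')))
    (intervalIntegrable_const)
    (MeasureTheory.ae_of_all _ (fun y _ s _ => hDG y s))
  have hderiv : deriv (fun s => ∫ y in (0:ℝ)..1, G y s) t = ∫ y in (0:ℝ)..1, G' y t :=
    key.2.deriv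
  have hfun : (fun s => ∫ x in (0:ℝ)..1,
        ((1 - α) * px w x s * pxt w x s + x * pxt w x s * pxx w x s))
      = fun s => ∫ y in (0:ℝ)..1, G y s := by
    funext s
    simp only [hGdef, hpx, hpxt, hpxx]
  -- integration by parts
  have hIBP := intervalIntegral.integral_mul_deriv_eq_deriv_mul
    (u := fun y => y) (u' := fun _ => (1:ℝ)) (v := fun y => A1 (y, t) ^ 2)
    (v' := fun y => (2:ℝ) * A1 (y, t) ^ 1 * A1x (y, t))
    (fun y _ => hasDerivAt_id y)
    (fun y _ => by
      have := (hDA1x y t).fun_pow 2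
      simpa using this)
    (continuous_const.intervalIntegrable 0 1)
    (((continuous_const.mul ((pd8_slice_cont cA1 t).pow 1)).mul
        (pd8_slice_cont cA1x t)).intervalIntegrable 0 1)
  -- split the derivative integral
  have e1 : ∀ y, G' y t = ((1 - α) * A1 (y, t) ^ 2
      + A1t (y, t) * ((1 - α) * B (y, t) + y * B1 (y, t)))
      + (1 / 2) * (y * ((2:ℝ) * A1 (y, t) ^ 1 * A1x (y, t))) := by
    intro y
    simp only [hG'def]
    rw [← hsw2 (y, t)]
    ring
  have int1 : IntervalIntegrable (fun y => (1 - α) * A1 (y, t) ^ 2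
      + A1t (y, t) * ((1 - α) * B (y, t) + y * B1 (y, t))) MeasureTheory.volume 0 1 := by
    apply Continuous.intervalIntegrable
    exact (continuous_const.mul ((pd8_slice_cont cA1 t).pow 2)).add
      ((pd8_slice_cont cA1t t).mul ((continuous_const.mul (pd8_slice_cont cB t)).add
        (continuous_id.mul (pd8_slice_cont cB1 t))))
  have int2 : IntervalIntegrable (fun y => (1 / 2) * (y * ((2:ℝ) * A1 (y, t) ^ 1 * A1x (y, t))))
      MeasureTheory.volume 0 1 := by
    apply Continuous.intervalIntegrable
    exact continuous_const.mul (continuous_id.mul ((continuous_const.mul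
      ((pd8_slice_cont cA1 t).pow 1)).mul (pd8_slice_cont cA1x t)))
  have int3 : IntervalIntegrable (fun y => (1 - α) * A1 (y, t) ^ 2)
      MeasureTheory.volume 0 1 :=
    (continuous_const.mul ((pd8_slice_cont cA1 t).pow 2)).intervalIntegrable 0 1
  have int4 : IntervalIntegrable (fun y => A1t (y, t) * ((1 - α) * B (y, t) + y * B1 (y, t)))
      MeasureTheory.volume 0 1 :=
    ((pd8_slice_cont cA1t t).mul ((continuous_const.mul (pd8_slice_cont cB t)).add
      (continuous_id.mul (pd8_slice_cont cB1 t)))).intervalIntegrable 0 1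
  have hsplit : (∫ y in (0:ℝ)..1, G' y t)
      = (1 - α) * (∫ y in (0:ℝ)..1, A1 (y, t) ^ 2)
        + (∫ y in (0:ℝ)..1, A1t (y, t) * ((1 - α) * B (y, t) + y * B1 (y, t)))
        + (1 / 2) * (∫ y in (0:ℝ)..1, y * ((2:ℝ) * A1 (y, t) ^ 1 * A1x (y, t))) := by
    rw [intervalIntegral.integral_congr (g := fun y =>
        ((1 - α) * A1 (y, t) ^ 2 + A1t (y, t) * ((1 - α) * B (y, t) + y * B1 (y, t)))
        + (1 / 2) * (y * ((2:ℝ) * A1 (y, t) ^ 1 * A1x (y, t)))) (fun y _ => e1 y)]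
    rw [intervalIntegral.integral_add int1 int2,
      intervalIntegral.integral_add int3 int4,
      intervalIntegral.integral_const_mul, intervalIntegral.integral_const_mul]
  -- assemble
  rw [hfun, hderiv]
  simp only [hpxtt, hpx, hpxx, hpxt]
  rw [hsplit]
  have hone : (∫ y in (0:ℝ)..1, (1:ℝ) * A1 (y, t) ^ 2) = ∫ y in (0:ℝ)..1, A1 (y, t) ^ 2 := by
    simp
  rw [hIBP, hone]
  ring
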